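/- Let σ_i, σ_j > 0, and let p, p′ > 0 and d ≥ 0 satisfy p + p′ + d = 1, d = 2·√(p·p′), and (p + d/2)·σ_j = (p′ + d/2)·σ_i. Then p = (σ_i/(σ_i + σ_j))² and σ_i/σ_j = √(p/p′). (In the Alternative model with ν = 2, the win probability equals the Bradley-Terry probability of two consecutive wins, and the strength ratio is the square root of the win-probability ratio.) -/
import Mathlib


/-- In the Alternative model with ν = 2, the win probability equals the
Bradley-Terry probability of two consecutive wins, and the strength ratio is
the square root of the win-probability ratio. -/
theorem alternative_nu_two (σi σj : ℝ) (hσi : 0 < σi) (hσj : 0 < σj)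
    (p p' d : ℝ) (hp : 0 < p) (hp' : 0 < p') (hd : 0 ≤ d)
    (hsum : p + p' + d = 1) (hdraw : d = 2 * Real.sqrt (p * p'))
    (hratio : (p + d / 2) * σj = (p' + d / 2) * σi) :
    p = (σi / (σi + σj)) ^ 2 ∧ σi / σj = Real.sqrt (p / p') := by
  set a := Real.sqrt p with hadef
  set b := Real.sqrt p' with hbdef
  have ha : 0 < a := Real.sqrt_pos.2 hp
  have hb : 0 < b := Real.sqrt_pos.2 hp'
  have hap : a ^ 2 = p := Real.sq_sqrt hp.le
  have hbp : b ^ 2 = p' := Real.sq_sqrt hp'.le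
  have hab : Real.sqrt (p * p') = a * b := Real.sqrt_mul hp.le p'
  have hd2 : d = 2 * (a * b) := by rw [hdraw, hab]
  have hsum1 : a + b = 1 := by nlinarith [sq_nonneg (a + b - 1), sq_nonneg (a + b + 1)]
  have hr : a * σj = b * σi := by nlinarith
  have hA : a = σi / (σi + σj) := by
    have hpos : 0 < σi + σj := by linarith
    field_simp
    nlinarith
  constructor
  · rw [← hap, hA]
  · have : Real.sqrt (p / p') = a / b := Real.sqrt_div hp.le p'
    rw [this]
    field_simp
    nlinarith
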